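/- Let n be a nonzero integer and a < b < c positive integers with ac > n and ab+n, ac+n, bc+n perfect squares; write ac+n = s^2 with s ≥ 0. If x, z are positive integers with a·z^2 - c·x^2 = n(a-c), then |sqrt((ac+n)/(ac)) - (s·x)/(a·z)| < (c·|n|)/(a·z^2). -/

import Mathlib

set_option maxHeartbeats 1000000

theorem stmt_6 (n a b c s x z : ℤ) (hn : n ≠ 0)
    (ha : 0 < a) (hab : a < b) (hbc : b < c) (hacn : a*c > n)
    (hsqab : IsSquare (a*b + n)) (hsqbc : IsSquare (b*c + n))
    (hs : 0 ≤ s) (hs2 : a*c + n = s^2)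
    (hx : 0 < x) (hz : 0 < z) (hpell : a*z^2 - c*x^2 = n*(a - c)) :
    |Real.sqrt (((a:ℝ)*c + n) / ((a:ℝ)*c)) - ((s:ℝ)*x) / ((a:ℝ)*z)|
      < ((c:ℝ) * |(n:ℝ)|) / ((a:ℝ) * (z:ℝ)^2) := by
  have hc : (0:ℤ) < c := by linarith
  have hA : (0:ℝ) < (a:ℝ) := by exact_mod_cast ha
  have hC : (0:ℝ) < (c:ℝ) := by exact_mod_cast hc
  have hAC : (0:ℝ) < (a:ℝ)*c := mul_pos hA hC
  have hacR : (a:ℝ) < c := by exact_mod_cast lt_trans hab hbc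
  have hX : (0:ℝ) < (x:ℝ) := by exact_mod_cast hx
  have hZ : (0:ℝ) < (z:ℝ) := by exact_mod_cast hz
  have hSnn : (0:ℝ) ≤ (s:ℝ) := by exact_mod_cast hs
  have hNne : ((n:ℝ)) ≠ 0 := by exact_mod_cast hn
  have hNpos : (0:ℝ) < |(n:ℝ)| := abs_pos.mpr hNne
  have hacnR : (n:ℝ) < (a:ℝ)*c := by exact_mod_cast hacn
  have hS2R : (a:ℝ)*c + n = (s:ℝ)^2 := by exact_mod_cast hs2
  have hPellR : (a:ℝ)*z^2 - (c:ℝ)*x^2 = (n:ℝ)*((a:ℝ)-c) := by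
    exact_mod_cast hpell
  obtain ⟨r, hr, hr2, hθ⟩ : ∃ r : ℝ, 0 < r ∧ r^2 = (a:ℝ)*c ∧
      Real.sqrt (((a:ℝ)*c + n) / ((a:ℝ)*c)) = (s:ℝ)/r := by
    refine ⟨Real.sqrt ((a:ℝ)*c), Real.sqrt_pos.mpr hAC, Real.sq_sqrt hAC.le, ?_⟩
    rw [hS2R, show (s:ℝ)^2/((a:ℝ)*c) = ((s:ℝ)/Real.sqrt ((a:ℝ)*c))^2 by
      rw [div_pow, Real.sq_sqrt hAC.le]]
    exact Real.sqrt_sq (div_nonneg hSnn (Real.sqrt_nonneg _))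
  rw [hθ]
  rcases hs.eq_or_lt with hs0 | hSposZ
  · -- s = 0 case
    have : (s:ℝ) = 0 := by exact_mod_cast hs0.symm
    rw [this]
    simp only [zero_div, zero_mul, sub_zero, abs_zero]
    positivity
  have hSR : (0:ℝ) < (s:ℝ) := by exact_mod_cast hSposZ
  set D : ℝ := (s:ℝ)/r + ((s:ℝ)*x)/((a:ℝ)*z) with hDdef
  have hD : 0 < D := by positivity
  -- core inequality
  have core : (s:ℝ)*z*((c:ℝ)-a) < (c:ℝ)*r*z + (c:ℝ)^2*x := by
    rcases hn.lt_or_gt with hneg | hpos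
    · have hnR : (n:ℝ) < 0 := by exact_mod_cast hneg
      have hSlt : (s:ℝ) < r := by nlinarith
      nlinarith [mul_pos (mul_pos hC hZ) (sub_pos.mpr hSlt),
        mul_nonneg (mul_nonneg hSnn hZ.le) hA.le, mul_pos (pow_pos hC 2) hX]
    · have hnR : (0:ℝ) < (n:ℝ) := by exact_mod_cast hpos
      have hSlt2 : (s:ℝ) < 2*r := by nlinarith
      have h1 : (a:ℝ)*z^2 < (c:ℝ)*x^2 := by nlinarith [hPellR]
      have h2 : (r*(z:ℝ))^2 < ((c:ℝ)*x)^2 := by nlinarith [h1, hr2, hC]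
      have hCX : r*z < (c:ℝ)*x := lt_of_pow_lt_pow_left₀ 2 (by positivity) h2
      nlinarith [mul_pos (mul_pos hC hZ) (sub_pos.mpr hSlt2),
        mul_nonneg (mul_nonneg hSnn hZ.le) hA.le, mul_pos hC (sub_pos.mpr hCX)]
  have core2 : r*((s:ℝ)*z*((c:ℝ)-a)) < (a:ℝ)*c^2*z + (c:ℝ)^2*x*r := by
    have h' := mul_lt_mul_of_pos_left core hr
    have e3 : r*((c:ℝ)*r*z + (c:ℝ)^2*x) = (a:ℝ)*c^2*z + (c:ℝ)^2*x*r := by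
      linear_combination ((c:ℝ)*z)*hr2
    linarith
  -- key identity
  have key : ((s:ℝ)/r - ((s:ℝ)*x)/((a:ℝ)*z)) * D
      = (s:ℝ)^2*((n:ℝ)*((a:ℝ)-c))/((a:ℝ)^2*c*(z:ℝ)^2) := by
    rw [hDdef]
    have e : ((s:ℝ)/r)^2 = (s:ℝ)^2/((a:ℝ)*c) := by rw [div_pow, hr2]
    have expand1 : ((s:ℝ)/r - ((s:ℝ)*x)/((a:ℝ)*z)) * ((s:ℝ)/r + ((s:ℝ)*x)/((a:ℝ)*z))
        = ((s:ℝ)/r)^2 - (((s:ℝ)*x)/((a:ℝ)*z))^2 := by ring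
    rw [expand1, e]
    field_simp
    linear_combination hPellR
  have hKabs : |(s:ℝ)^2*((n:ℝ)*((a:ℝ)-c))/((a:ℝ)^2*c*(z:ℝ)^2)|
      = (s:ℝ)^2*|(n:ℝ)| * ((c:ℝ)-a)/((a:ℝ)^2*c*(z:ℝ)^2) := by
    rw [abs_div, abs_mul, abs_mul, abs_of_pos (pow_pos hSR 2),
      abs_of_pos (by positivity : (0:ℝ) < (a:ℝ)^2*c*(z:ℝ)^2),
      abs_of_neg (by linarith : (a:ℝ)-c < 0)]
    ring
  have final : (s:ℝ)^2*|(n:ℝ)| * ((c:ℝ)-a)/((a:ℝ)^2*c*(z:ℝ)^2)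
      < ((c:ℝ) * |(n:ℝ)|) / ((a:ℝ) * (z:ℝ)^2) * D := by
    have expand : ((c:ℝ) * |(n:ℝ)|) / ((a:ℝ) * (z:ℝ)^2) * D
        - (s:ℝ)^2*|(n:ℝ)| * ((c:ℝ)-a)/((a:ℝ)^2*c*(z:ℝ)^2)
        = (|(n:ℝ)| * (s:ℝ)/((a:ℝ)^2*c*(z:ℝ)^3*r))
          * ((a:ℝ)*c^2*z + (c:ℝ)^2*x*r - r*((s:ℝ)*z*((c:ℝ)-a))) := by
      rw [hDdef]; field_simp
    have hmulpos : 0 < |(n:ℝ)| * (s:ℝ)/((a:ℝ)^2*c*(z:ℝ)^3*r) := by positivity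
    have hbracket : 0 < (a:ℝ)*c^2*z + (c:ℝ)^2*x*r - r*((s:ℝ)*z*((c:ℝ)-a)) := by
      linarith
    nlinarith [mul_pos hmulpos hbracket]
  have hθp : (s:ℝ)/r - ((s:ℝ)*x)/((a:ℝ)*z)
      = (s:ℝ)^2*((n:ℝ)*((a:ℝ)-c))/((a:ℝ)^2*c*(z:ℝ)^2) / D := by
    rw [eq_div_iff hD.ne']; exact key
  rw [hθp, abs_div, abs_of_pos hD, div_lt_iff₀ hD, hKabs]
  exact final
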